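/- arXiv:1806.02108 — 2 statements merged into one kernel-verified Lean document; each statement's English description precedes it below -/
import Mathlib

section
/- Let C be a k-linear Hom-finite triangulated category with split idempotents, t an n-cluster tilting object, T = add(t), F = Hom_C(t,−). For m ∈ T * ΣT and c ∈ C, the map Hom_C(m,c) → Hom_Γ(Fm, Fc) given by μ ↦ Fμ (where Γ = End_C(t)) is surjective, and its kernel consists exactly of the morphisms m → c that factor through an object of ΣT. -/
open CategoryTheory Category Limits Pretriangulated Opposite

universe v u

section Defs

variable {C : Type u} [Category.{v} C]

section Add

variable [Preadditive C] [HasFiniteBiproducts C]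

/-- `x` lies in `add t`: it is a direct summand of a finite direct sum of copies of `t`. -/
def inAdd (t x : C) : Prop :=
  ∃ (n : ℕ) (i : x ⟶ ⨁ (fun _ : Fin n => t)) (r : ⨁ (fun _ : Fin n => t) ⟶ x),
    i ≫ r = 𝟙 x

end Add

/-- A morphism lies in the radical of the category. -/
def radMor [Preadditive C] {x y : C} (f : x ⟶ y) : Prop :=
  ∀ g : y ⟶ x, IsIso (𝟙 x - f ≫ g)

/-- An object is indecomposable. -/
def IndecObj [Preadditive C] [HasBinaryBiproducts C] (s : C) : Prop :=
  ¬ IsZero s ∧ ∀ (a b : C), (s ≅ a ⊞ b) → IsZero a ∨ IsZero b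

/-- Every object has a precover by an object of `Tset` (contravariant finiteness). -/
def IsPrecovering (Tset : Set C) : Prop :=
  ∀ c : C, ∃ (x : C) (f : x ⟶ c), x ∈ Tset ∧
    ∀ x' ∈ Tset, ∀ g : x' ⟶ c, ∃ h : x' ⟶ x, h ≫ f = g

/-- Every object has a preenvelope by an object of `Tset` (covariant finiteness). -/
def IsPreenveloping (Tset : Set C) : Prop :=
  ∀ c : C, ∃ (x : C) (f : c ⟶ x), x ∈ Tset ∧
    ∀ x' ∈ Tset, ∀ g : c ⟶ x', ∃ h : x ⟶ x', f ≫ h = g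

/-- `f : x ⟶ c` is a `Tset`-cover: a right minimal `Tset`-approximation. -/
def IsTCover (Tset : Set C) {x c : C} (f : x ⟶ c) : Prop :=
  x ∈ Tset ∧ (∀ x' ∈ Tset, ∀ g : x' ⟶ c, ∃ h : x' ⟶ x, h ≫ f = g) ∧
    ∀ φ : x ⟶ x, φ ≫ f = f → IsIso φ

section Shift

variable [Preadditive C] [HasShift C ℤ]

/-- `Tset` is an `n`-cluster tilting subcategory: it is functorially finite and coincides with
both `Ext^{1..n-1}`-orthogonals of itself. -/
structure IsClusterTiltingSub (n : ℕ) (Tset : Set C) : Prop where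
  precovering : IsPrecovering Tset
  preenveloping : IsPreenveloping Tset
  mem_iff_ext₁ : ∀ c : C, c ∈ Tset ↔
    ∀ i : ℕ, 1 ≤ i → i ≤ n - 1 → ∀ x ∈ Tset, ∀ f : x ⟶ c⟦(i : ℤ)⟧, f = 0
  mem_iff_ext₂ : ∀ c : C, c ∈ Tset ↔
    ∀ i : ℕ, 1 ≤ i → i ≤ n - 1 → ∀ x ∈ Tset, ∀ f : c ⟶ x⟦(i : ℤ)⟧, f = 0

/-- `t` is an `n`-cluster tilting object: `add t` is an `n`-cluster tilting subcategory. -/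
def IsClusterTiltingObj [HasFiniteBiproducts C] (n : ℕ) (t : C) : Prop :=
  IsClusterTiltingSub n {x : C | inAdd t x}

end Shift

section Tri

variable [Preadditive C] [HasZeroObject C] [HasShift C ℤ]
  [∀ n : ℤ, (shiftFunctor C n).Additive] [Pretriangulated C]

/-- The Iyama–Yoshino star operation `X * Y` on full subcategories. -/
def star (X Y : Set C) : Set C :=
  {c | ∃ (x y : C) (f : x ⟶ c) (g : c ⟶ y) (h : y ⟶ x⟦(1 : ℤ)⟧),
    Triangle.mk f g h ∈ (distTriang C) ∧ x ∈ X ∧ y ∈ Y}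

/-- Iterated star operation `X₁ * X₂ * ⋯ * Xₘ`. -/
def starList : List (Set C) → Set C
  | [] => {c | IsZero c}
  | [X] => X
  | X :: Y :: L => star X (starList (Y :: L))

/-- A tower of triangles connecting the objects `cobj (m+1), cobj m, …, cobj 1, cobj 0`:
triangles `w (i+1) ⟶ cobj (i+1) ⟶ w i ⟶ (w (i+1))⟦1⟧` for `i < m`, with
`w 0 = cobj 0` and `w m = cobj (m+1)`. -/
structure TriTower (m : ℕ) (cobj : ℕ → C) where
  w : ℕ → C
  fmor : ∀ i : ℕ, w (i + 1) ⟶ cobj (i + 1)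
  gmor : ∀ i : ℕ, cobj (i + 1) ⟶ w i
  hmor : ∀ i : ℕ, w i ⟶ (w (i + 1))⟦(1 : ℤ)⟧
  mem : ∀ i < m, Triangle.mk (fmor i) (gmor i) (hmor i) ∈ distTriang C
  w_zero : w 0 = cobj 0
  w_top : w m = cobj (m + 1)

/-- The composite `w 0 ⟶ Σʲ (w j)` of the (suitably shifted) wavy morphisms of a tower. -/
noncomputable def towerComp {m : ℕ} {cobj : ℕ → C} (tw : TriTower m cobj) :
    ∀ j : ℕ, (tw.w 0 ⟶ (tw.w j)⟦(j : ℤ)⟧)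
  | 0 => (shiftFunctorZero' C ((0 : ℕ) : ℤ) (by simp)).inv.app (tw.w 0)
  | (j + 1) => towerComp tw j ≫ (shiftFunctor C (j : ℤ)).map (tw.hmor j) ≫
      (shiftFunctorAdd' C (1 : ℤ) (j : ℤ) ((j + 1 : ℕ) : ℤ) (by push_cast; ring)).inv.app
        (tw.w (j + 1))

/-- The full composite `cobj 0 ⟶ Σᵐ (cobj (m+1))` of the wavy morphisms of a tower. -/
noncomputable def towerGamma {m : ℕ} {cobj : ℕ → C} (tw : TriTower m cobj) :
    cobj 0 ⟶ (cobj (m + 1))⟦(m : ℤ)⟧ :=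
  eqToHom tw.w_zero.symm ≫ towerComp tw m ≫ eqToHom (by rw [tw.w_top])

/-- `cls` is constant on isomorphism classes of objects of `Tset` and additive on biproducts
of objects of `Tset`; quantifying over all such `cls` encodes identities in the split
Grothendieck group `K₀^{sp}(Tset)`. -/
def IsAddOn [HasFiniteBiproducts C] (Tset : Set C) {G : Type*} [AddCommGroup G]
    (cls : C → G) : Prop :=
  (∀ x y : C, x ∈ Tset → y ∈ Tset → Nonempty (x ≅ y) → cls x = cls y) ∧
  (∀ x y : C, x ∈ Tset → y ∈ Tset → cls (x ⊞ y) = cls x + cls y)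

/-- `ind` is the triangulated index with respect to `Tset`: for each `c` there is a tower of
triangles built from `Tset`-covers, and `ind c` is the alternating sum of the classes of its
`Tset`-objects. -/
def IsIndex [HasFiniteBiproducts C] (n : ℕ) (Tset : Set C) {G : Type*} [AddCommGroup G]
    (cls ind : C → G) : Prop :=
  ∀ c : C, ∃ (cobj : ℕ → C) (tw : TriTower (n - 1) cobj),
    cobj 0 = c ∧ (∀ i < n - 1, IsTCover Tset (tw.gmor i)) ∧ cobj n ∈ Tset ∧
    ind c = ∑ i ∈ Finset.range n, ((-1 : ℤ) ^ i) • cls (cobj (i + 1))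

/-- `ind` is the `(d+2)`-angulated index with respect to `Tset`: for each `s ∈ Sset` there is a
`(d+2)`-angle (encoded as a tower of triangles) `t_d → ⋯ → t_0 → s → Σ^d t_d` with `t_i ∈ Tset`
and radical maps, and `ind s` is the alternating sum of the classes of the `t_i`. -/
def IsHigherIndex [HasFiniteBiproducts C] (d : ℕ) (Tset Sset : Set C) {G : Type*}
    [AddCommGroup G] (cls ind : C → G) : Prop :=
  ∀ s ∈ Sset, ∃ (cobj : ℕ → C) (tw : TriTower d cobj),
    cobj 0 = s ∧ (∀ i, 1 ≤ i → i ≤ d + 1 → cobj i ∈ Tset) ∧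
    (∀ j : ℕ, j + 2 ≤ d → radMor (tw.gmor (j + 1) ≫ tw.fmor j)) ∧
    (∀ j : ℕ, (hj : j + 1 = d) →
      radMor ((eqToHom (show cobj (d + 1) = tw.w (j + 1) by rw [hj, tw.w_top]) :
        cobj (d + 1) ⟶ tw.w (j + 1)) ≫ tw.fmor j)) ∧
    ind s = ∑ i ∈ Finset.range (d + 1), ((-1 : ℤ) ^ i) • cls (cobj (i + 1))

/-- `t` is an Oppermann–Thomas cluster tilting object of the `(d+2)`-angulated category `Sset`:
`Hom(t, Σ^d t) = 0`, and every `s ∈ Sset` admits a `(d+2)`-angle (encoded as a tower)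
`t_d → ⋯ → t_0 → s → Σ^d t_d` with all `t_i ∈ add t`. -/
def IsOTClusterTilting [HasFiniteBiproducts C] (d : ℕ) (Sset : Set C) (t : C) : Prop :=
  t ∈ Sset ∧ (∀ f : t ⟶ t⟦(d : ℤ)⟧, f = 0) ∧
    ∀ s ∈ Sset, ∃ (cobj : ℕ → C) (tw : TriTower d cobj),
      cobj 0 = s ∧ ∀ i, 1 ≤ i → i ≤ d + 1 → inAdd t (cobj i)

/-- A `N`-Calabi–Yau structure on `Sset`: a bifunctorial perfect pairing
`Hom(x,y) × Hom(y, x⟦N⟧) → k`, encoding natural isomorphisms `Hom(x,y) ≅ D Hom(y, x⟦N⟧)`. -/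
structure CYData (k : Type*) [Field k] [Linear k C] (Sset : Set C) (N : ℤ) where
  pair : ∀ x y : C, (x ⟶ y) → (y ⟶ x⟦N⟧) → k
  add_left : ∀ x y, x ∈ Sset → y ∈ Sset → ∀ (f f' : x ⟶ y) (g : y ⟶ x⟦N⟧),
    pair x y (f + f') g = pair x y f g + pair x y f' g
  add_right : ∀ x y, x ∈ Sset → y ∈ Sset → ∀ (f : x ⟶ y) (g g' : y ⟶ x⟦N⟧),
    pair x y f (g + g') = pair x y f g + pair x y f g'
  smul_left : ∀ x y, x ∈ Sset → y ∈ Sset → ∀ (a : k) (f : x ⟶ y) (g : y ⟶ x⟦N⟧),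
    pair x y (a • f) g = a * pair x y f g
  smul_right : ∀ x y, x ∈ Sset → y ∈ Sset → ∀ (a : k) (f : x ⟶ y) (g : y ⟶ x⟦N⟧),
    pair x y f (a • g) = a * pair x y f g
  assoc : ∀ x y z, x ∈ Sset → y ∈ Sset → z ∈ Sset →
    ∀ (f : x ⟶ y) (g : y ⟶ z) (h : z ⟶ x⟦N⟧),
    pair x z (f ≫ g) h = pair x y f (g ≫ h)
  nondeg_left : ∀ x y, x ∈ Sset → y ∈ Sset → ∀ f : x ⟶ y,
    (∀ g : y ⟶ x⟦N⟧, pair x y f g = 0) → f = 0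
  nondeg_right : ∀ x y, x ∈ Sset → y ∈ Sset → ∀ g : y ⟶ x⟦N⟧,
    (∀ f : x ⟶ y, pair x y f g = 0) → g = 0

end Tri

end Defs


section Aux

variable {C : Type u} [Category.{v} C]

section AuxAdd

variable [Preadditive C] [HasFiniteBiproducts C]

lemma inAdd_self (t : C) : inAdd t t := by
  refine ⟨1, biproduct.lift (fun _ => 𝟙 t), biproduct.π _ 0, by simp⟩

lemma inAdd_of_iso {t t' x : C} (e : t ≅ t') (h : inAdd t x) : inAdd t' x := by
  obtain ⟨N, i, r, hir⟩ := h
  have hmm : biproduct.map (fun _ : Fin N => e.hom) ≫ biproduct.map (fun _ : Fin N => e.inv) =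
      𝟙 _ := by
    apply biproduct.hom_ext
    intro j
    simp
  exact ⟨N, i ≫ biproduct.map (fun _ => e.hom), biproduct.map (fun _ => e.inv) ≫ r,
    by rw [Category.assoc, ← Category.assoc (biproduct.map _), hmm, Category.id_comp, hir]⟩

lemma inAdd_map {D : Type*} [Category D] [Preadditive D] [HasFiniteBiproducts D]
    (F : C ⥤ D) [F.Additive] {t x : C} (h : inAdd t x) : inAdd (F.obj t) (F.obj x) := by
  obtain ⟨N, i, r, hir⟩ := h
  refine ⟨N, F.map i ≫ (F.mapBiproduct (fun _ : Fin N => t)).hom,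
    (F.mapBiproduct (fun _ : Fin N => t)).inv ≫ F.map r, ?_⟩
  rw [Category.assoc, ← Category.assoc (Iso.hom _), Iso.hom_inv_id, Category.id_comp,
    ← F.map_comp, hir, F.map_id]

/-- A map out of an object of `add t` vanishing on all `t`-points is zero. -/
lemma zero_of_points_zero {t x z : C} (hx : inAdd t x) (f : x ⟶ z)
    (h : ∀ g : t ⟶ x, g ≫ f = 0) : f = 0 := by
  obtain ⟨N, i, r, hir⟩ := hx
  have hr : r ≫ f = 0 := by
    apply biproduct.hom_ext'
    intro j
    simpa using h (biproduct.ι (fun _ : Fin N => t) j ≫ r)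
  rw [← Category.id_comp f, ← hir, Category.assoc, hr, comp_zero]

/-- A `Γ`-linear map `Hom(t,x) → Hom(t,c)` with `x ∈ add t` is induced by a morphism. -/
lemma repr_of_inAdd {t x c : C} (hx : inAdd t x) (ψ : (t ⟶ x) → (t ⟶ c))
    (hadd : ∀ g g' : t ⟶ x, ψ (g + g') = ψ g + ψ g')
    (hlin : ∀ (e : t ⟶ t) (g : t ⟶ x), ψ (e ≫ g) = e ≫ ψ g) :
    ∃ ν : x ⟶ c, ∀ g : t ⟶ x, ψ g = g ≫ ν := by
  obtain ⟨N, i, r, hir⟩ := hx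
  set Ψ : (t ⟶ x) →+ (t ⟶ c) := AddMonoidHom.mk' ψ hadd with hΨ
  refine ⟨i ≫ biproduct.desc (fun j => ψ (biproduct.ι (fun _ : Fin N => t) j ≫ r)),
    fun g => ?_⟩
  have hg : g = ∑ j : Fin N, (g ≫ i ≫ biproduct.π (fun _ : Fin N => t) j) ≫
      (biproduct.ι (fun _ : Fin N => t) j ≫ r) := by
    have h1 : g = g ≫ i ≫ (𝟙 (⨁ (fun _ : Fin N => t))) ≫ r := by
      rw [Category.id_comp, hir, Category.comp_id]
    conv_lhs => rw [h1, ← biproduct.total]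
    rw [Preadditive.sum_comp, Preadditive.comp_sum, Preadditive.comp_sum]
    exact Finset.sum_congr rfl (fun j _ => by simp)
  have hlift : biproduct.lift (fun j => g ≫ i ≫ biproduct.π (fun _ : Fin N => t) j) =
      g ≫ i := by
    apply biproduct.hom_ext
    intro j
    simp
  calc ψ g = Ψ g := rfl
    _ = ∑ j : Fin N, Ψ ((g ≫ i ≫ biproduct.π (fun _ : Fin N => t) j) ≫
        (biproduct.ι (fun _ : Fin N => t) j ≫ r)) := by rw [← map_sum, ← hg]
    _ = ∑ j : Fin N, (g ≫ i ≫ biproduct.π (fun _ : Fin N => t) j) ≫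
        ψ (biproduct.ι (fun _ : Fin N => t) j ≫ r) :=
        Finset.sum_congr rfl (fun j _ => hlin _ _)
    _ = biproduct.lift (fun j => g ≫ i ≫ biproduct.π (fun _ : Fin N => t) j) ≫
        biproduct.desc (fun j => ψ (biproduct.ι (fun _ : Fin N => t) j ≫ r)) :=
        (biproduct.lift_desc).symm
    _ = g ≫ i ≫ biproduct.desc (fun j => ψ (biproduct.ι (fun _ : Fin N => t) j ≫ r)) := by
        rw [hlift, Category.assoc]

end AuxAdd

section AuxTri

variable [Preadditive C] [HasZeroObject C] [HasShift C ℤ]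
  [∀ n : ℤ, (shiftFunctor C n).Additive] [Pretriangulated C] [HasFiniteBiproducts C]

lemma hom_shift_zero {n : ℕ} (hn : 2 ≤ n) {t : C} (ht : IsClusterTiltingObj n t)
    {a b : C} (ha : inAdd t a) (hb : inAdd t b) (f : a ⟶ b⟦(1 : ℤ)⟧) : f = 0 := by
  have h := (ht.mem_iff_ext₁ b).mp hb 1 le_rfl (by omega) a ha
  have : ((1 : ℕ) : ℤ) = (1 : ℤ) := by norm_num
  rw [this] at h
  exact h f

lemma hom_to_addShift_zero {n : ℕ} (hn : 2 ≤ n) {t : C} (ht : IsClusterTiltingObj n t)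
    {a t₁ : C} (ha : inAdd t a) (h1 : inAdd t t₁) (f : a ⟶ t₁⟦(1 : ℤ)⟧) : f = 0 :=
  hom_shift_zero hn ht ha h1 f

lemma hom_to_shiftAdd_zero {n : ℕ} (hn : 2 ≤ n) {t : C} (ht : IsClusterTiltingObj n t)
    {a y : C} (ha : inAdd t a) (hy : inAdd (t⟦(1 : ℤ)⟧) y) (f : a ⟶ y) : f = 0 := by
  obtain ⟨N, i, r, hir⟩ := hy
  have hi : f ≫ i = 0 := by
    apply biproduct.hom_ext
    intro j
    rw [Category.assoc]
    rw [hom_shift_zero hn ht ha (inAdd_self t) (f ≫ i ≫ biproduct.π _ j), zero_comp]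
  rw [← Category.comp_id f, ← hir, ← Category.assoc, hi, zero_comp]

end AuxTri

end Aux

variable {C : Type u} [Category.{v} C]

theorem stmt2 (k : Type*) [Field k] [Preadditive C] [CategoryTheory.Linear k C] [HasZeroObject C]
    [HasShift C ℤ] [∀ n : ℤ, (shiftFunctor C n).Additive] [Pretriangulated C]
    [HasFiniteBiproducts C] [IsIdempotentComplete C]
    [∀ X Y : C, FiniteDimensional k (X ⟶ Y)]
    (n : ℕ) (hn : 2 ≤ n) (t : C) (ht : IsClusterTiltingObj n t)
    (m c : C) (hm : m ∈ star {x : C | inAdd t x} {x : C | inAdd (t⟦(1 : ℤ)⟧) x}) :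
    (∀ φ : (t ⟶ m) → (t ⟶ c),
        (∀ g g' : t ⟶ m, φ (g + g') = φ g + φ g') →
        (∀ (e : t ⟶ t) (g : t ⟶ m), φ (e ≫ g) = e ≫ φ g) →
        ∃ μ : m ⟶ c, ∀ g : t ⟶ m, φ g = g ≫ μ) ∧
      (∀ μ : m ⟶ c,
        (∀ g : t ⟶ m, g ≫ μ = 0) ↔
          ∃ (t₁ : C) (u : m ⟶ t₁⟦(1 : ℤ)⟧) (w : t₁⟦(1 : ℤ)⟧ ⟶ c),
            inAdd t t₁ ∧ u ≫ w = μ) := by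
  obtain ⟨x, y, f, g, h, hT, hx, hy⟩ := hm
  have hyneg : inAdd t (y⟦(-1 : ℤ)⟧) := by
    have h1 : inAdd ((t⟦(1 : ℤ)⟧)⟦(-1 : ℤ)⟧) (y⟦(-1 : ℤ)⟧) :=
      inAdd_map (shiftFunctor C (-1 : ℤ)) hy
    exact inAdd_of_iso ((shiftEquiv C (1 : ℤ)).unitIso.symm.app t) h1
  constructor
  · intro φ hadd hlin
    obtain ⟨ν, hν⟩ := repr_of_inAdd hx (fun g0 => φ (g0 ≫ f))
      (fun g0 g0' => by rw [Preadditive.add_comp]; exact hadd _ _)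
      (fun e g0 => by rw [Category.assoc]; exact hlin _ _)
    have hφ0 : φ 0 = 0 := by
      have h0 := hadd 0 0
      rw [add_zero] at h0
      exact (left_eq_add.mp h0)
    set T' := (Triangle.mk f g h).invRotate with hT'def
    have hT' : T' ∈ distTriang C := inv_rot_of_distTriang _ hT
    have hmor : T'.mor₁ ≫ ν = 0 := by
      apply zero_of_points_zero hyneg
      intro g0
      have h12 := comp_distTriang_mor_zero₁₂ _ hT'
      calc g0 ≫ T'.mor₁ ≫ ν = (g0 ≫ T'.mor₁) ≫ ν := (Category.assoc _ _ _).symm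
        _ = φ ((g0 ≫ T'.mor₁) ≫ f) := (hν _).symm
        _ = φ (g0 ≫ (T'.mor₁ ≫ T'.mor₂)) := by exact congrArg φ (Category.assoc _ _ _)
        _ = φ (g0 ≫ (0 : _ ⟶ m)) := by exact congrArg (fun z => φ (g0 ≫ z)) h12
        _ = 0 := by rw [comp_zero, hφ0]
    obtain ⟨μ, hμ⟩ := Triangle.yoneda_exact₂ _ hT' ν hmor
    refine ⟨μ, fun g0 => ?_⟩
    have hg0y : g0 ≫ g = 0 := hom_to_shiftAdd_zero hn ht (inAdd_self t) hy (g0 ≫ g)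
    obtain ⟨g1, hg1⟩ := Triangle.coyoneda_exact₂ _ hT g0 hg0y
    rw [hg1]
    show φ (g1 ≫ f) = (g1 ≫ f) ≫ μ
    exact (hν g1).trans (by rw [hμ]; exact (Category.assoc _ _ _).symm)
  · intro μ
    constructor
    · intro hμ
      have hfμ : f ≫ μ = 0 := by
        apply zero_of_points_zero hx
        intro g0
        rw [← Category.assoc]
        exact hμ (g0 ≫ f)
      obtain ⟨w', hw'⟩ := Triangle.yoneda_exact₂ _ hT μ hfμ
      obtain ⟨N, i, r, hir⟩ := hy
      refine ⟨⨁ (fun _ : Fin N => t),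
        g ≫ i ≫ ((shiftFunctor C (1 : ℤ)).mapBiproduct (fun _ : Fin N => t)).inv,
        ((shiftFunctor C (1 : ℤ)).mapBiproduct (fun _ : Fin N => t)).hom ≫ r ≫ w',
        ⟨N, 𝟙 _, 𝟙 _, Category.id_comp _⟩, ?_⟩
      rw [hw']
      simp only [Category.assoc, Iso.inv_hom_id_assoc]
      rw [show i ≫ r ≫ w' = w' from (reassoc_of% hir) w']
      rfl
    · rintro ⟨t₁, u, w, h1, huw⟩ g0
      rw [← huw, ← Category.assoc,
        hom_to_addShift_zero hn ht (inAdd_self t) h1 (g0 ≫ u), zero_comp]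
end

section
/- Let C be a k-linear Hom-finite triangulated category with split idempotents and t an n-cluster tilting object with T = add(t). For every c ∈ C there is a tower of triangles with objects t_{n-1}, ..., t_0 ∈ T, where each morphism t_i → (successive cone) is a T-cover, and the objects t_i are determined up to isomorphism by c. Consequently the triangulated index index_T(c) = Σ_{i=0}^{n-1} (−1)^i [t_i] ∈ K_0^{sp}(T) is well defined. -/
open CategoryTheory Category Limits Pretriangulated Opposite

universe v u

variable {C : Type u} [Category.{v} C]


section MyAux

section Poly
open Polynomial
variable {k : Type*} [Field k]

lemma mypoly_split (p : k[X]) (hp : p ≠ 0) :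
    ∃ (m : ℕ) (q : k[X]), p = X ^ m * q ∧ q.coeff 0 ≠ 0 := by
  obtain ⟨d, hd⟩ : ∃ d, p.natDegree = d := ⟨_, rfl⟩
  induction d using Nat.strong_induction_on generalizing p with
  | _ d IH =>
    by_cases h0 : p.coeff 0 = 0
    · obtain ⟨q', hq'⟩ : (X : k[X]) ∣ p := X_dvd_iff.2 h0
      have hq'0 : q' ≠ 0 := by rintro rfl; simp at hq'; exact hp hq'
      have hdeg : p.natDegree = q'.natDegree + 1 := by
        rw [hq', natDegree_mul X_ne_zero hq'0, natDegree_X]; ring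
      obtain ⟨m, q, h1, h2⟩ := IH q'.natDegree (by omega) q' hq'0 rfl
      exact ⟨m + 1, q, by rw [hq', h1, pow_succ]; ring, h2⟩
    · exact ⟨0, p, by simp, h0⟩

lemma mypoly_coprime {q : k[X]} (hq : q.coeff 0 ≠ 0) (m : ℕ) :
    IsCoprime ((X : k[X]) ^ m) q := by
  refine IsCoprime.pow_left ?_
  refine ⟨-(C (q.coeff 0)⁻¹) * divX q, C (q.coeff 0)⁻¹, ?_⟩
  have h := X_mul_divX_add q
  have : C (q.coeff 0)⁻¹ * (X * divX q) + C (q.coeff 0)⁻¹ * C (q.coeff 0)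
      = C (q.coeff 0)⁻¹ * q := by rw [← mul_add, h]
  rw [← C_mul, inv_mul_cancel₀ hq, C_1] at this
  linear_combination -this
end Poly

set_option linter.unusedSectionVars false

section Fitting
variable {k : Type*} [Field k]
variable {C : Type u} [Category.{v} C] [Preadditive C] [CategoryTheory.Linear k C]

lemma myIsIso_of_unit {x : C} (φ ψ : End x) (h1 : φ * ψ = 1) (h2 : ψ * φ = 1) :
    IsIso (φ : x ⟶ x) :=
  ⟨(ψ : x ⟶ x), by rw [← End.mul_def, h2, End.one_def], by rw [← End.mul_def, h1, End.one_def]⟩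

lemma myFitting [∀ X Y : C, FiniteDimensional k (X ⟶ Y)] {x : C} (φ : x ⟶ x) :
    IsIso φ ∨ ∃ e : x ⟶ x, e ≫ e = e ∧ e ≠ 𝟙 x ∧
      ∀ (c : C) (f : x ⟶ c), φ ≫ f = f → e ≫ f = f := by
  haveI : Module.Finite k (End x) := inferInstanceAs (FiniteDimensional k (x ⟶ x))
  set Φ : End x := φ with hΦ
  have hint : IsIntegral k Φ := IsIntegral.of_finite k Φ
  have hcomm : ∀ r s : Polynomial k, Polynomial.aeval Φ r * Polynomial.aeval Φ s
      = Polynomial.aeval Φ s * Polynomial.aeval Φ r := by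
    intro r s; rw [← map_mul, mul_comm, map_mul]
  have hp0 : minpoly k Φ ≠ 0 := minpoly.ne_zero hint
  have hpev : Polynomial.aeval Φ (minpoly k Φ) = 0 := minpoly.aeval k Φ
  obtain ⟨m, q, hpq, hq0⟩ := mypoly_split (minpoly k Φ) hp0
  by_cases hiso : IsIso φ
  · exact Or.inl hiso
  have hm : m ≠ 0 := by
    rintro rfl
    refine hiso ?_
    have hqev : Polynomial.aeval Φ q = 0 := by
      rw [hpq, pow_zero, one_mul] at hpev; exact hpev
    set D := Polynomial.aeval Φ (Polynomial.divX q) with hD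
    have hX : Φ * D + algebraMap k (End x) (q.coeff 0) = 0 := by
      have h2 : Polynomial.aeval Φ (Polynomial.X * Polynomial.divX q
          + Polynomial.C (q.coeff 0)) = 0 := by
        rw [Polynomial.X_mul_divX_add q, hqev]
      rw [map_add, map_mul, Polynomial.aeval_X, Polynomial.aeval_C] at h2
      exact h2
    set ψ : End x := -((q.coeff 0)⁻¹ • D) with hψ
    have key : Φ * D = -(algebraMap k (End x) (q.coeff 0)) := by
      linear_combination (norm := abel) hX
    have haux : (q.coeff 0)⁻¹ • algebraMap k (End x) (q.coeff 0) = 1 := by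
      rw [Algebra.algebraMap_eq_smul_one, smul_smul, inv_mul_cancel₀ hq0, one_smul]
    have hmul : Φ * ψ = 1 := by
      rw [hψ, mul_neg, mul_smul_comm, key, smul_neg, neg_neg, haux]
    have hcommX : ∀ r : Polynomial k, Polynomial.aeval Φ r * Φ = Φ * Polynomial.aeval Φ r := by
      intro r
      have h := hcomm r Polynomial.X
      rwa [Polynomial.aeval_X] at h
    have hmul2 : ψ * Φ = 1 := by
      rw [← hmul, hψ, neg_mul, mul_neg, smul_mul_assoc, mul_smul_comm]
      congr 2
      exact hcommX _
    exact myIsIso_of_unit Φ ψ hmul hmul2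
  obtain ⟨m', rfl⟩ : ∃ m', m = m' + 1 := ⟨m - 1, by omega⟩
  obtain ⟨a, b, hab⟩ := mypoly_coprime hq0 (m' + 1)
  set E := Polynomial.aeval Φ (a * Polynomial.X ^ (m' + 1)) with hE
  set E' := Polynomial.aeval Φ (b * q) with hE'
  have hsum : E + E' = 1 := by rw [hE, hE', ← map_add, hab, map_one]
  have hpe : Polynomial.aeval Φ (Polynomial.X ^ (m' + 1) * q) = 0 := by rw [← hpq]; exact hpev
  have hEE' : E * E' = 0 := by
    rw [hE, hE', ← map_mul]
    have : a * Polynomial.X ^ (m' + 1) * (b * q) = a * b * (Polynomial.X ^ (m' + 1) * q) := by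
      ring
    rw [this, map_mul, hpe, mul_zero]
  have hidem : E * E = E := by
    have h1 : E * E + E * E' = E := by rw [← mul_add, hsum, mul_one]
    rw [hEE', add_zero] at h1; exact h1
  have hM : Polynomial.aeval Φ ((Polynomial.X : Polynomial k) ^ (m' + 1)) = Φ ^ (m' + 1) := by
    rw [map_pow, Polynomial.aeval_X]
  have hME' : Φ ^ (m' + 1) * E' = 0 := by
    rw [← hM, hE', ← map_mul]
    have : Polynomial.X ^ (m' + 1) * (b * q) = b * (Polynomial.X ^ (m' + 1) * q) := by ring
    rw [this, map_mul, hpe, mul_zero]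
  have hXmul : ∀ r : Polynomial k, Φ * Polynomial.aeval Φ r
      = Polynomial.aeval Φ (Polynomial.X * r) := by
    intro r; rw [map_mul, Polynomial.aeval_X]
  have hcommX : ∀ r : Polynomial k, Polynomial.aeval Φ r * Φ = Φ * Polynomial.aeval Φ r := by
    intro r
    have h := hcomm r Polynomial.X
    rwa [Polynomial.aeval_X] at h
  refine Or.inr ⟨(E : x ⟶ x), ?_, ?_, ?_⟩
  · show (E : x ⟶ x) ≫ E = E
    rw [← End.mul_def, hidem]
  · intro hE1
    refine hiso ?_
    have hE1' : E = 1 := by rw [← End.one_def] at hE1; exact hE1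
    have k1 : Φ * Polynomial.aeval Φ (a * Polynomial.X ^ m') = 1 := by
      rw [hXmul]
      have : Polynomial.X * (a * Polynomial.X ^ m') = a * Polynomial.X ^ (m' + 1) := by
        rw [pow_succ]; ring
      rw [this, ← hE, hE1']
    have k2 : Polynomial.aeval Φ (a * Polynomial.X ^ m') * Φ = 1 := by
      rw [hcommX, k1]
    exact myIsIso_of_unit Φ _ k1 k2
  · intro c f hf
    have hpow : ∀ j : ℕ, ((Φ ^ j : End x) : x ⟶ x) ≫ f = f := by
      intro j
      induction j with
      | zero => rw [pow_zero, End.one_def, id_comp]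
      | succ j IH =>
        rw [pow_succ, End.mul_def, assoc, IH]
        exact hf
    have hE'f : (E' : x ⟶ x) ≫ f = 0 := by
      have h1 : (E' : x ⟶ x) ≫ f
          = ((E' : x ⟶ x) ≫ ((Φ ^ (m' + 1) : End x) : x ⟶ x)) ≫ f := by
        rw [assoc, hpow]
      rw [h1, ← End.mul_def, hME']
      show (0 : x ⟶ x) ≫ f = 0
      simp
    have : ((E + E' : End x) : x ⟶ x) ≫ f = (E : x ⟶ x) ≫ f + (E' : x ⟶ x) ≫ f :=
      Preadditive.add_comp _ _ _ _ _ _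
    rw [hsum, End.one_def, id_comp, hE'f, add_zero] at this
    exact this.symm

lemma myCoverExists [∀ X Y : C, FiniteDimensional k (X ⟶ Y)] [IsIdempotentComplete C]
    {Tset : Set C}
    (hretract : ∀ (x y : C) (i : y ⟶ x) (r : x ⟶ y), i ≫ r = 𝟙 y → x ∈ Tset → y ∈ Tset)
    (hpre : IsPrecovering Tset) (c : C) : ∃ (x : C) (f : x ⟶ c), IsTCover Tset f := by
  classical
  set P : ℕ → Prop := fun d => ∃ (x : C) (f : x ⟶ c), (x ∈ Tset ∧
    (∀ x' ∈ Tset, ∀ g : x' ⟶ c, ∃ h : x' ⟶ x, h ≫ f = g)) ∧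
    Module.finrank k (x ⟶ x) = d with hP
  have hPex : ∃ d, P d := by
    obtain ⟨x, f, hx, hfac⟩ := hpre c
    exact ⟨_, x, f, ⟨hx, hfac⟩, rfl⟩
  obtain ⟨x, f, ⟨hx, hfac⟩, hd⟩ := Nat.find_spec hPex
  refine ⟨x, f, hx, hfac, ?_⟩
  intro φ hφ
  rcases myFitting (k := k) φ with hiso | ⟨e, hee, hne, hef⟩
  · exact hiso
  exfalso
  obtain ⟨y, i, r, hir, hri⟩ := IsIdempotentComplete.idempotents_split x e hee
  have hy : y ∈ Tset := hretract x y i r hir hx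
  have hef' : e ≫ f = f := hef c f hφ
  have hfac' : ∀ x' ∈ Tset, ∀ g : x' ⟶ c, ∃ h : x' ⟶ y, h ≫ (i ≫ f) = g := by
    intro x' hx' g
    obtain ⟨h, hh⟩ := hfac x' hx' g
    refine ⟨h ≫ r, ?_⟩
    rw [assoc, ← assoc r i f, hri, hef', hh]
  have hcancel : ∀ ψ : y ⟶ y, i ≫ (r ≫ ψ ≫ i) ≫ r = ψ := by
    intro ψ
    simp only [assoc]
    rw [hir, comp_id, ← assoc, hir, id_comp]
  have hinj : Function.Injective
      ((CategoryTheory.Linear.leftComp k x r).comp (CategoryTheory.Linear.rightComp k y i)) := by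
    intro ψ ψ' h
    simp only [LinearMap.coe_comp, Function.comp_apply, CategoryTheory.Linear.rightComp_apply,
      CategoryTheory.Linear.leftComp_apply] at h
    rw [← hcancel ψ, ← hcancel ψ', h]
  have hnetop : LinearMap.range
      ((CategoryTheory.Linear.leftComp k x r).comp (CategoryTheory.Linear.rightComp k y i))
        ≠ ⊤ := by
    intro htop
    have hmem : (𝟙 x - e) ∈ LinearMap.range
        ((CategoryTheory.Linear.leftComp k x r).comp
          (CategoryTheory.Linear.rightComp k y i)) := by
      rw [htop]; trivial
    obtain ⟨ψ, hψ⟩ := hmem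
    simp only [LinearMap.coe_comp, Function.comp_apply, CategoryTheory.Linear.rightComp_apply,
      CategoryTheory.Linear.leftComp_apply] at hψ
    have h1 : e ≫ (r ≫ ψ ≫ i) = r ≫ ψ ≫ i := by
      rw [← hri]
      simp only [assoc]
      rw [← assoc i r, hir, id_comp]
    rw [hψ] at h1
    have h2 : e ≫ (𝟙 x - e) = 0 := by
      simp [Preadditive.comp_sub, hee]
    rw [h2] at h1
    exact hne (sub_eq_zero.mp h1.symm).symm
  have hlt : Module.finrank k (y ⟶ y) < Module.finrank k (x ⟶ x) := by
    rw [← LinearMap.finrank_range_of_inj hinj]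
    exact Submodule.finrank_lt hnetop
  have : P (Module.finrank k (y ⟶ y)) := ⟨y, i ≫ f, ⟨hy, hfac'⟩, rfl⟩
  exact Nat.find_min hPex (hd ▸ hlt) this

end Fitting

section TriAux

variable {C : Type u} [Category.{v} C] [Preadditive C] [HasZeroObject C] [HasShift C ℤ]
  [∀ n : ℤ, (shiftFunctor C n).Additive] [Pretriangulated C]

lemma myIsTCover_eqToHom {Tset : Set C} {x x' c c' : C} (hx : x' = x) (hc : c = c')
    {g : x ⟶ c} (hg : IsTCover Tset g) : IsTCover Tset (eqToHom hx ≫ g ≫ eqToHom hc) := by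
  subst hx; subst hc
  simp only [eqToHom_refl, id_comp, comp_id]
  exact hg

lemma myIsTCover_comp_iso {Tset : Set C} {x c c' : C} {g : x ⟶ c} (hg : IsTCover Tset g)
    (β : c ⟶ c') [IsIso β] : IsTCover Tset (g ≫ β) := by
  refine ⟨hg.1, ?_, ?_⟩
  · intro x' hx' g0
    obtain ⟨h, hh⟩ := hg.2.1 x' hx' (g0 ≫ inv β)
    refine ⟨h, ?_⟩
    rw [← assoc, hh, assoc, IsIso.inv_hom_id, comp_id]
  · intro φ hφ
    apply hg.2.2
    have := congrArg (fun u => u ≫ inv β) hφ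
    simpa [assoc] using this

lemma myCover_unique {Tset : Set C} {x x' c : C} {f : x ⟶ c} {f' : x' ⟶ c}
    (hf : IsTCover Tset f) (hf' : IsTCover Tset f') : ∃ α : x ≅ x', α.hom ≫ f' = f := by
  obtain ⟨u, hu⟩ := hf'.2.1 x hf.1 f
  obtain ⟨v, hv⟩ := hf.2.1 x' hf'.1 f'
  have huv : IsIso (u ≫ v) := hf.2.2 _ (by rw [assoc, hv, hu])
  have hvu : IsIso (v ≫ u) := hf'.2.2 _ (by rw [assoc, hu, hv])
  have h1 : u ≫ (v ≫ inv (u ≫ v)) = 𝟙 x := by rw [← assoc, IsIso.hom_inv_id]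
  have h2 : (inv (v ≫ u) ≫ v) ≫ u = 𝟙 x' := by rw [assoc, IsIso.inv_hom_id]
  haveI : Mono u := ⟨fun g g' hgg => by
    have := congrArg (fun z => z ≫ (v ≫ inv (u ≫ v))) hgg
    simpa only [assoc, h1, comp_id] using this⟩
  haveI : IsSplitEpi u := ⟨⟨⟨inv (v ≫ u) ≫ v, h2⟩⟩⟩
  haveI : IsIso u := isIso_of_mono_of_isSplitEpi u
  exact ⟨asIso u, hu⟩

/-- One step of the tower construction. -/
structure MyStep (Tset : Set C) (w : C) where
  tt : C
  w' : C
  fm : w' ⟶ tt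
  gm : tt ⟶ w
  hm : w ⟶ w'⟦(1 : ℤ)⟧
  dist : Triangle.mk fm gm hm ∈ distTriang C
  cov : IsTCover Tset gm

lemma myStep_exists (Tset : Set C)
    (hcov : ∀ c : C, ∃ (x : C) (f : x ⟶ c), IsTCover Tset f) (w : C) :
    Nonempty (MyStep Tset w) := by
  obtain ⟨x, g, hg⟩ := hcov w
  obtain ⟨w', fm, hm, mem⟩ := distinguished_cocone_triangle₁ g
  exact ⟨⟨x, w', fm, g, hm, mem, hg⟩⟩

variable {Tset : Set C}

/-- the chain of wavy objects -/
noncomputable def myW (sd : ∀ w : C, MyStep Tset w) (c : C) : ℕ → C :=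
  fun j => Nat.rec c (fun _ w => (sd w).w') j

/-- the chain of cover objects -/
noncomputable def myT (sd : ∀ w : C, MyStep Tset w) (c : C) (j : ℕ) : C :=
  (sd (myW sd c j)).tt

noncomputable def myF (sd : ∀ w : C, MyStep Tset w) (c : C) (j : ℕ) :
    myW sd c (j + 1) ⟶ myT sd c j :=
  (sd (myW sd c j)).fm

noncomputable def myG (sd : ∀ w : C, MyStep Tset w) (c : C) (j : ℕ) :
    myT sd c j ⟶ myW sd c j :=
  (sd (myW sd c j)).gm

noncomputable def myH (sd : ∀ w : C, MyStep Tset w) (c : C) (j : ℕ) :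
    myW sd c j ⟶ (myW sd c (j + 1))⟦(1 : ℤ)⟧ :=
  (sd (myW sd c j)).hm

lemma myDist (sd : ∀ w : C, MyStep Tset w) (c : C) (j : ℕ) :
    Triangle.mk (myF sd c j) (myG sd c j) (myH sd c j) ∈ distTriang C :=
  (sd (myW sd c j)).dist

lemma myCov (sd : ∀ w : C, MyStep Tset w) (c : C) (j : ℕ) :
    IsTCover Tset (myG sd c j) :=
  (sd (myW sd c j)).cov

/-- vanishing propagation along the chain -/
lemma myVanish (n : ℕ) (hn : 2 ≤ n)
    (hext : ∀ c ∈ Tset, ∀ i : ℕ, 1 ≤ i → i ≤ n - 1 → ∀ x ∈ Tset,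
      ∀ f : x ⟶ c⟦(i : ℤ)⟧, f = 0)
    (sd : ∀ w : C, MyStep Tset w) (c : C) :
    ∀ j, ∀ i : ℕ, 1 ≤ i → i ≤ j → i ≤ n - 1 → ∀ x ∈ Tset,
      ∀ f : x ⟶ (myW sd c j)⟦(i : ℤ)⟧, f = 0 := by
  have hT : ∀ j, myT sd c j ∈ Tset := fun j => (myCov sd c j).1
  have hfac : ∀ j, ∀ x ∈ Tset, ∀ g : x ⟶ myW sd c j, ∃ h, h ≫ myG sd c j = g :=
    fun j x hx g => (myCov sd c j).2.1 x hx g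
  intro j
  induction j with
  | zero => intro i h1 h2; omega
  | succ j IH =>
    intro i h1 h2 h3 x hx f
    rcases Nat.lt_or_ge i 2 with hi2 | hi2
    · obtain rfl : i = 1 := by omega
      set Δ := Triangle.mk (myF sd c j) (myG sd c j) (myH sd c j) with hΔ
      have hrot : Δ.rotate ∈ distTriang C := rot_of_distTriang _ (myDist sd c j)
      have hf3 : f ≫ Δ.rotate.mor₃ = 0 := by
        have : ∀ u : x ⟶ (myT sd c j)⟦((1 : ℕ) : ℤ)⟧, u = 0 := fun u =>
          hext (myT sd c j) (hT j) 1 le_rfl (by omega) x hx u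
        exact this _
      obtain ⟨g, hg⟩ := Triangle.coyoneda_exact₃ _ hrot f hf3
      obtain ⟨h, hh⟩ := hfac j x hx g
      have heq : f = h ≫ myG sd c j ≫ myH sd c j := by
        rw [hg, ← hh]
        exact assoc _ _ _
      have h0 : myG sd c j ≫ myH sd c j = 0 := comp_distTriang_mor_zero₂₃ _ (myDist sd c j)
      rw [heq, h0, comp_zero]
    · obtain ⟨s, rfl⟩ : ∃ s, i = s + 1 := ⟨i - 1, by omega⟩
      have hs1 : 1 ≤ s := by omega
      set Δ := Triangle.mk (myF sd c j) (myG sd c j) (myH sd c j) with hΔ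
      have hΔ' : (CategoryTheory.shiftFunctor (Triangle C) (s : ℤ)).obj Δ ∈ distTriang C :=
        Triangle.shift_distinguished Δ (myDist sd c j) (s : ℤ)
      set Δ' := (CategoryTheory.shiftFunctor (Triangle C) (s : ℤ)).obj Δ with hΔ'd
      have hrot : Δ'.rotate ∈ distTriang C := rot_of_distTriang _ hΔ'
      have hadd : (s : ℤ) + 1 = ((s + 1 : ℕ) : ℤ) := by push_cast; ring
      set β := shiftFunctorAdd' C (s : ℤ) (1 : ℤ) ((s + 1 : ℕ) : ℤ) hadd with hβ
      set u : x ⟶ ((myW sd c (j + 1))⟦(s : ℤ)⟧)⟦(1 : ℤ)⟧ :=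
        f ≫ β.hom.app (myW sd c (j + 1)) with hu
      have hu3 : u ≫ Δ'.rotate.mor₃ = 0 := by
        have hv : (u ≫ Δ'.rotate.mor₃) ≫ β.inv.app (myT sd c j) = 0 :=
          hext (myT sd c j) (hT j) (s + 1) (by omega) h3 x hx _
        have heq : u ≫ Δ'.rotate.mor₃
            = ((u ≫ Δ'.rotate.mor₃) ≫ β.inv.app (myT sd c j)) ≫ β.hom.app (myT sd c j) := by
          have gen : ∀ {A B D : C} (v : A ⟶ B) (e : B ≅ D), v = (v ≫ e.hom) ≫ e.inv :=
            fun v e => by simp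
          exact gen (u ≫ Δ'.rotate.mor₃) (β.app (myT sd c j)).symm
        rw [heq, hv, zero_comp]
        rfl
      obtain ⟨g, hg⟩ := Triangle.coyoneda_exact₃ _ hrot u hu3
      have hg0 : g = 0 := IH s hs1 (by omega) (by omega) x hx g
      have hu0 : u = 0 := by rw [hg, hg0, zero_comp]; rfl
      have heq2 : f = u ≫ β.inv.app (myW sd c (j + 1)) := by
        rw [hu, assoc, Iso.hom_inv_id_app, comp_id]
      rw [heq2, hu0, zero_comp]

/-- the tower objects -/
noncomputable def myCobj (sd : ∀ w : C, MyStep Tset w) (c : C) (n : ℕ) : ℕ → C :=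
  fun i => Nat.rec c (fun j _ => if j + 1 ≤ n - 1 then myT sd c j else myW sd c (n - 1)) i

lemma myCobj_succ (sd : ∀ w : C, MyStep Tset w) (c : C) (n i : ℕ) :
    myCobj sd c n (i + 1) = if i + 1 ≤ n - 1 then myT sd c i else myW sd c (n - 1) := rfl

/-- the tower -/
noncomputable def myTower (sd : ∀ w : C, MyStep Tset w) (c : C) (n : ℕ) :
    TriTower (n - 1) (myCobj sd c n) where
  w i := if i ≤ n - 1 then myW sd c i else myW sd c (n - 1)
  fmor i := if h : i + 1 ≤ n - 1 then
      eqToHom (if_pos h) ≫ myF sd c i ≫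
        eqToHom (by rw [myCobj_succ, if_pos h]) else 0
  gmor i := if h : i + 1 ≤ n - 1 then
      eqToHom (by rw [myCobj_succ, if_pos h]) ≫ myG sd c i ≫
        eqToHom (if_pos (by omega : i ≤ n - 1)).symm else 0
  hmor i := if h : i + 1 ≤ n - 1 then
      eqToHom (if_pos (by omega : i ≤ n - 1)) ≫ myH sd c i ≫
        eqToHom (by rw [if_pos h]) else 0
  mem i hi := by
    have h : i + 1 ≤ n - 1 := hi
    rw [dif_pos h, dif_pos h, dif_pos h]
    have gen : ∀ {A A' B B' : C} (F : A ⟶ B) (p : A' = A) (q : B = B') (r : B' = B)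
        (s : A' = A), (eqToHom p ≫ F ≫ eqToHom q) ≫ (eqToIso r).hom = (eqToIso s).hom ≫ F := by
      intros; subst_vars; simp
    have gen3 : ∀ {A A' B B' : C} (F : A ⟶ B⟦(1 : ℤ)⟧) (p : A' = A)
        (q : B⟦(1 : ℤ)⟧ = B'⟦(1 : ℤ)⟧) (r : B' = B) (s : A' = A),
        (eqToHom p ≫ F ≫ eqToHom q) ≫ (shiftFunctor C (1 : ℤ)).map (eqToIso r).hom
          = (eqToIso s).hom ≫ F := by
      intros; subst_vars; simp
    refine isomorphic_distinguished _ (myDist sd c i) _ ?_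
    refine Triangle.isoMk _ _ (eqToIso (if_pos h))
      (eqToIso (show myCobj sd c n (i + 1) = myT sd c i by rw [myCobj_succ, if_pos h]))
      (eqToIso (show (if i ≤ n - 1 then myW sd c i else myW sd c (n - 1)) = myW sd c i from
        if_pos (by omega))) ?_ ?_ ?_
    · exact gen _ _ _ _ _
    · exact gen _ _ _ _ _
    · exact gen3 _ _ _ _ _
  w_zero := by simp [myW, myCobj]
  w_top := by
    rw [if_pos le_rfl, myCobj_succ, if_neg (by omega)]

lemma myExistTower {k : Type*} [Field k] [CategoryTheory.Linear k C]
    [HasFiniteBiproducts C] [IsIdempotentComplete C] [∀ X Y : C, FiniteDimensional k (X ⟶ Y)]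
    (n : ℕ) (hn : 2 ≤ n)
    (hretract : ∀ (x y : C) (i : y ⟶ x) (r : x ⟶ y), i ≫ r = 𝟙 y → x ∈ Tset → y ∈ Tset)
    (hct : IsClusterTiltingSub n Tset) (c : C) :
    ∃ (cobj : ℕ → C) (tw : TriTower (n - 1) cobj),
      cobj 0 = c ∧ (∀ i < n - 1, IsTCover Tset (tw.gmor i)) ∧ cobj n ∈ Tset := by
  classical
  have hcov : ∀ w : C, ∃ (x : C) (f : x ⟶ w), IsTCover Tset f := fun w =>
    myCoverExists (k := k) hretract hct.precovering w
  let sd : ∀ w : C, MyStep Tset w := fun w => Classical.choice (myStep_exists Tset hcov w)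
  have hext : ∀ c' ∈ Tset, ∀ i : ℕ, 1 ≤ i → i ≤ n - 1 → ∀ x ∈ Tset,
      ∀ f : x ⟶ c'⟦(i : ℤ)⟧, f = 0 := fun c' hc' => (hct.mem_iff_ext₁ c').mp hc'
  have hvan := myVanish n hn hext sd c
  have hWmem : myW sd c (n - 1) ∈ Tset := by
    refine (hct.mem_iff_ext₁ (myW sd c (n - 1))).mpr ?_
    intro i h1 h2 x hx f
    exact hvan (n - 1) i h1 h2 h2 x hx f
  refine ⟨myCobj sd c n, myTower sd c n, rfl, ?_, ?_⟩
  · intro i hi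
    have h : i + 1 ≤ n - 1 := hi
    show IsTCover Tset ((myTower sd c n).gmor i)
    have : (myTower sd c n).gmor i = eqToHom (by rw [myCobj_succ, if_pos h]) ≫ myG sd c i ≫
        eqToHom (if_pos (by omega : i ≤ n - 1)).symm := by
      show dite _ _ _ = _
      exact dif_pos h
    rw [this]
    exact myIsTCover_eqToHom _ _ (myCov sd c i)
  · obtain ⟨m, rfl⟩ : ∃ m, n = m + 1 := ⟨n - 1, by omega⟩
    have : myCobj sd c (m + 1) (m + 1) = myW sd c (m + 1 - 1) := by
      rw [myCobj_succ, if_neg (by omega)]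
    rw [this]
    exact hWmem

lemma myUniqTower (n : ℕ) (hn : 2 ≤ n) (c : C)
    (cobj cobj' : ℕ → C) (tw : TriTower (n - 1) cobj) (tw' : TriTower (n - 1) cobj')
    (h0 : cobj 0 = c) (h0' : cobj' 0 = c)
    (hcov : ∀ i < n - 1, IsTCover Tset (tw.gmor i))
    (hcov' : ∀ i < n - 1, IsTCover Tset (tw'.gmor i)) :
    ∀ i, 1 ≤ i → i ≤ n → Nonempty (cobj i ≅ cobj' i) := by
  have key : ∀ i, i ≤ n - 1 → Nonempty (tw.w i ≅ tw'.w i) := by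
    intro i
    induction i with
    | zero =>
      intro _
      exact ⟨eqToIso (by rw [tw.w_zero, tw'.w_zero, h0, h0'])⟩
    | succ i IHi =>
      intro hii
      obtain ⟨e⟩ := IHi (by omega)
      have hi : i < n - 1 := by omega
      have hcov2 : IsTCover Tset (tw'.gmor i ≫ e.inv) := myIsTCover_comp_iso (hcov' i hi) e.inv
      obtain ⟨α, hα⟩ := myCover_unique (hcov i hi) hcov2
      have hsq : tw.gmor i ≫ e.hom = α.hom ≫ tw'.gmor i := by
        rw [← hα, assoc, assoc, Iso.inv_hom_id, comp_id]
      set Δ := Triangle.mk (tw.fmor i) (tw.gmor i) (tw.hmor i) with hΔ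
      set Δ' := Triangle.mk (tw'.fmor i) (tw'.gmor i) (tw'.hmor i) with hΔ'
      have hrot : Δ.rotate ∈ distTriang C := rot_of_distTriang _ (tw.mem i hi)
      have hrot' : Δ'.rotate ∈ distTriang C := rot_of_distTriang _ (tw'.mem i hi)
      obtain ⟨γ, hγ1, hγ2⟩ := Pretriangulated.complete_distinguished_triangle_morphism
        Δ.rotate Δ'.rotate hrot hrot' α.hom e.hom hsq
      have hγiso : IsIso γ :=
        isIso₃_of_isIso₁₂ ⟨α.hom, e.hom, γ, hsq, hγ1, hγ2⟩ hrot hrot'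
          (Iso.isIso_hom α) (Iso.isIso_hom e)
      haveI := hγiso
      exact ⟨(shiftFunctor C (1 : ℤ)).preimageIso
        (@asIso _ _ _ _ (γ : (tw.w (i + 1))⟦(1 : ℤ)⟧ ⟶ (tw'.w (i + 1))⟦(1 : ℤ)⟧) hγiso)⟩
  intro i h1 h2
  rcases Nat.lt_or_ge i n with hlt | hge
  · obtain ⟨j, rfl⟩ : ∃ j, i = j + 1 := ⟨i - 1, by omega⟩
    have hj : j < n - 1 := by omega
    obtain ⟨e⟩ := key j (by omega)
    have hcov2 : IsTCover Tset (tw'.gmor j ≫ e.inv) := myIsTCover_comp_iso (hcov' j hj) e.inv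
    obtain ⟨α, hα⟩ := myCover_unique (hcov j hj) hcov2
    exact ⟨α⟩
  · obtain ⟨e⟩ := key (n - 1) le_rfl
    have hn1 : n - 1 + 1 = n := by omega
    have hin : i = n := by omega
    subst hin
    refine ⟨eqToIso ?_ ≪≫ e ≪≫ eqToIso ?_⟩
    · rw [tw.w_top, hn1]
    · rw [tw'.w_top, hn1]

end TriAux

end MyAux

theorem stmt5 (k : Type*) [Field k] [Preadditive C] [CategoryTheory.Linear k C] [HasZeroObject C]
    [HasShift C ℤ] [∀ n : ℤ, (shiftFunctor C n).Additive] [Pretriangulated C]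
    [HasFiniteBiproducts C] [IsIdempotentComplete C]
    [∀ X Y : C, FiniteDimensional k (X ⟶ Y)]
    (n : ℕ) (hn : 2 ≤ n) (t : C) (ht : IsClusterTiltingObj n t) (c : C) :
    (∃ (cobj : ℕ → C) (tw : TriTower (n - 1) cobj),
      cobj 0 = c ∧ (∀ i < n - 1, IsTCover {x : C | inAdd t x} (tw.gmor i)) ∧
      inAdd t (cobj n)) ∧
    (∀ (cobj cobj' : ℕ → C) (tw : TriTower (n - 1) cobj) (tw' : TriTower (n - 1) cobj'),
      cobj 0 = c → cobj' 0 = c →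
      (∀ i < n - 1, IsTCover {x : C | inAdd t x} (tw.gmor i)) → inAdd t (cobj n) →
      (∀ i < n - 1, IsTCover {x : C | inAdd t x} (tw'.gmor i)) → inAdd t (cobj' n) →
      (∀ i, 1 ≤ i → i ≤ n → Nonempty (cobj i ≅ cobj' i)) ∧
      ∀ (G : Type*) [AddCommGroup G] (cls : C → G), IsAddOn {x : C | inAdd t x} cls →
        ∑ i ∈ Finset.range n, ((-1 : ℤ) ^ i) • cls (cobj (i + 1)) =
          ∑ i ∈ Finset.range n, ((-1 : ℤ) ^ i) • cls (cobj' (i + 1)))  := by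
  have htriv : {x : C | inAdd t x} = {x : C | inAdd t x} := rfl
  have hretract : ∀ (x y : C) (i : y ⟶ x) (r : x ⟶ y), i ≫ r = 𝟙 y →
      x ∈ {x : C | inAdd t x} → y ∈ {x : C | inAdd t x} := by
    intro x y i r hir hx
    obtain ⟨m, j, s, hjs⟩ := hx
    refine ⟨m, i ≫ j, s ≫ r, ?_⟩
    rw [assoc, ← assoc j s r, hjs, id_comp, hir]
  constructor
  · exact myExistTower (k := k) n hn hretract ht c
  · intro cobj cobj' tw tw' h0 h0' hcovs hmem hcovs' hmem'
    have hiso := myUniqTower (Tset := {x : C | inAdd t x}) n hn c cobj cobj' tw tw'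
      h0 h0' hcovs hcovs'
    refine ⟨hiso, ?_⟩
    intro G _ cls hcls
    refine Finset.sum_congr rfl ?_
    intro i hi
    have hi' : i < n := Finset.mem_range.mp hi
    have hmem1 : cobj (i + 1) ∈ {x : C | inAdd t x} := by
      rcases Nat.lt_or_ge i (n - 1) with h | h
      · exact (hcovs i h).1
      · obtain rfl : i + 1 = n := by omega
        exact hmem
    have hmem2 : cobj' (i + 1) ∈ {x : C | inAdd t x} := by
      rcases Nat.lt_or_ge i (n - 1) with h | h
      · exact (hcovs' i h).1
      · obtain rfl : i + 1 = n := by omega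
        exact hmem'
    have := hcls.1 (cobj (i + 1)) (cobj' (i + 1)) hmem1 hmem2
      (hiso (i + 1) (by omega) (by omega))
    rw [this]
end
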